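/- Let Δ ⊂ ℝⁿ be a compact convex polytope with 0 in its interior. Define the relative Donaldson–Futaki invariant L_θ(g) = (1/|Δ|)(∫_{∂Δ} g dσ - ∫_Δ g (n + θ_Δ) dy) where θ_Δ = 1 - |Δ| l and l is the Ricci affine function, and the relative Ding invariant I_l(g) = -g(0) + ∫_Δ g l dy. Then for every convex function g on Δ, L_θ(g) - I_l(g) = ((n+1)/|Δ|) ∫_Δ (ḡ - g) dy ≥ 0, where ḡ is the radial affinization of g. In particular, relative Ding semistability (I_l ≥ 0 on convex functions) implies relative K-semistability (L_θ ≥ 0 on convex functions). -/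

import Mathlib

open MeasureTheory

/-- Relative Donaldson–Futaki versus relative Ding invariant:
`L_θ(g) - I_l(g) = ((n+1)/|Δ|) ∫_Δ (ḡ - g) dy ≥ 0`, where `θ_Δ = 1 - |Δ|·l`
and `ḡ` is the radial affinization of `g`; in particular `I_l(g) ≥ 0`
implies `L_θ(g) ≥ 0` (relative Ding semistability implies relative
K-semistability). -/
theorem relative_DF_sub_relative_ding {n : ℕ} (Δ : Set (Fin n → ℝ))
    (hΔc : IsCompact Δ) (hΔconv : Convex ℝ Δ)
    (h0 : (0 : Fin n → ℝ) ∈ interior Δ)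
    (σ : Measure (Fin n → ℝ)) (hσfin : IsFiniteMeasure σ)
    (hpull : ∀ F : (Fin n → ℝ) → ℝ, ContinuousOn F (closure Δ) →
      ∫ y in Δ, F y =
        ∫ z in frontier Δ, (∫ t in Set.Ioc (0 : ℝ) 1, t ^ (n - 1) * F (t • z)) ∂σ)
    (l : (Fin n → ℝ) → ℝ)
    (hla : ∃ a : Fin n → ℝ, ∃ c : ℝ, ∀ y, l y = (∑ i, a i * y i) + c)
    (hl1 : ∫ y in Δ, l y = 1)
    (hlm : ∀ i : Fin n, ∫ y in Δ, y i * l y = 0)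
    (g : (Fin n → ℝ) → ℝ) (hgconv : ConvexOn ℝ Δ g)
    (hgcont : ContinuousOn g (closure Δ))
    (gbar : (Fin n → ℝ) → ℝ)
    (hgbar : ∀ z ∈ frontier Δ, ∀ t ∈ Set.Icc (0 : ℝ) 1,
      gbar (t • z) = (1 - t) * g 0 + t * g z) :
    ((volume Δ).toReal⁻¹ *
        ((∫ z in frontier Δ, g z ∂σ) -
          ∫ y in Δ, g y * (n + (1 - (volume Δ).toReal * l y))) -
      (-g 0 + ∫ y in Δ, g y * l y) =
      (n + 1 : ℝ) * (volume Δ).toReal⁻¹ * ∫ y in Δ, (gbar y - g y)) ∧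
    (0 ≤ (n + 1 : ℝ) * (volume Δ).toReal⁻¹ * ∫ y in Δ, (gbar y - g y)) ∧
    (0 ≤ -g 0 + (∫ y in Δ, g y * l y) →
      0 ≤ (volume Δ).toReal⁻¹ *
        ((∫ z in frontier Δ, g z ∂σ) -
          ∫ y in Δ, g y * (n + (1 - (volume Δ).toReal * l y)))) := by
  classical
  haveI := hσfin
  have hΔcl : IsClosed Δ := hΔc.isClosed
  have hclos : closure Δ = Δ := hΔcl.closure_eq
  have hΔmeas : MeasurableSet Δ := hΔcl.measurableSet
  have h0Δ : (0 : Fin n → ℝ) ∈ Δ := interior_subset h0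
  have hΔnhds : Δ ∈ nhds (0 : Fin n → ℝ) := mem_interior_iff_mem_nhds.1 h0
  have hVfin : volume Δ ≠ ⊤ := hΔc.measure_lt_top.ne
  have hVpos : (0 : ENNReal) < volume Δ := Measure.measure_pos_of_nonempty_interior _ ⟨0, h0⟩
  set V : ℝ := (volume Δ).toReal with hVdef
  have hVr : 0 < V := ENNReal.toReal_pos hVpos.ne' hVfin
  -- the frontier is nonempty
  have hfront : (frontier Δ).Nonempty := by
    rw [Set.nonempty_iff_ne_empty]
    intro h
    have h1 := hpull (fun _ => (1 : ℝ)) continuousOn_const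
    rw [h] at h1
    have : V = 0 := by simpa [hVdef, Measure.real] using h1
    exact absurd this hVr.ne'
  obtain ⟨z₀, hz₀⟩ := hfront
  have hfΔ : frontier Δ ⊆ Δ := hΔcl.frontier_subset
  -- n is positive
  have hn : 0 < n := by
    rcases Nat.eq_zero_or_pos n with h | h
    · exfalso
      subst h
      have hz0 : z₀ = 0 := Subsingleton.elim _ _
      have h2 : z₀ ∈ Δ \ interior Δ := hΔcl.frontier_eq ▸ hz₀
      exact h2.2 (hz0 ▸ h0)
    · exact h
  have hnR : (0 : ℝ) < n := by exact_mod_cast hn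
  have hnR1 : (0 : ℝ) < (n : ℝ) + 1 := by linarith
  -- gauge facts
  have habs : Absorbent ℝ Δ := absorbent_nhds_zero hΔnhds
  have hbdd : Bornology.IsVonNBounded ℝ Δ :=
    NormedSpace.isVonNBounded_of_isBounded ℝ hΔc.isBounded
  set p : (Fin n → ℝ) → ℝ := gauge Δ with hpdef
  have hpc : Continuous p := continuous_gauge hΔconv hΔnhds
  have hp0 : p 0 = 0 := gauge_zero
  have hpfr : ∀ z, z ∈ frontier Δ ↔ p z = 1 := fun z =>
    (gauge_eq_one_iff_mem_frontier hΔconv hΔnhds).symm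
  have hple : ∀ y ∈ Δ, p y ≤ 1 := fun y hy => gauge_le_one_of_mem hy
  have hppos : ∀ y : Fin n → ℝ, y ≠ 0 → 0 < p y := fun y hy => (gauge_pos habs hbdd).2 hy
  have hpnn : ∀ y, 0 ≤ p y := gauge_nonneg
  have hpsmul : ∀ t : ℝ, 0 ≤ t → ∀ y, p (t • y) = t * p y := by
    intro t ht y
    rw [hpdef, gauge_smul_of_nonneg ht, smul_eq_mul]
  set q : (Fin n → ℝ) → (Fin n → ℝ) := fun y => (p y)⁻¹ • y with hqdef
  set G : (Fin n → ℝ) → ℝ := fun y => (1 - p y) * g 0 + p y * g (q y) with hGdef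
  -- the radial formula for G
  have hkey : ∀ z ∈ frontier Δ, ∀ t : ℝ, 0 ≤ t → t ≤ 1 →
      G (t • z) = (1 - t) * g 0 + t * g z := by
    intro z hz t ht0 _
    have hpz : p z = 1 := (hpfr z).1 hz
    have hpt : p (t • z) = t := by rw [hpsmul t ht0 z, hpz, mul_one]
    rcases eq_or_lt_of_le ht0 with rfl | ht0'
    · simp [hGdef, hp0]
    · have hq : q (t • z) = z := by
        simp only [hqdef, hpt]
        rw [inv_smul_smul₀ (ne_of_gt ht0')]
      simp only [hGdef, hq, hpt]
  -- representation of nonzero points of Δ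
  have hrep : ∀ y ∈ Δ, y ≠ 0 →
      q y ∈ frontier Δ ∧ y = p y • q y ∧ 0 < p y ∧ p y ≤ 1 := by
    intro y hy hy0
    have h1 : 0 < p y := hppos y hy0
    have h2 : p (q y) = 1 := by
      simp only [hqdef]
      rw [hpsmul (p y)⁻¹ (inv_nonneg.2 (hpnn y)) y, inv_mul_cancel₀ h1.ne']
    refine ⟨(hpfr _).2 h2, ?_, h1, hple y hy⟩
    simp only [hqdef]
    rw [smul_inv_smul₀ h1.ne']
  have hG0 : G 0 = g 0 := by simp [hGdef, hp0]
  -- G agrees with gbar on Δ, and dominates g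
  have hGgbar : ∀ y ∈ Δ, gbar y = G y := by
    intro y hy
    rcases eq_or_ne y 0 with rfl | hy0
    · have h1 := hgbar z₀ hz₀ 0 ⟨le_refl 0, zero_le_one⟩
      rw [zero_smul] at h1
      rw [h1, hG0]; ring
    · obtain ⟨hqf, hrepr, h1, h2⟩ := hrep y hy hy0
      have h3 := hgbar (q y) hqf (p y) ⟨h1.le, h2⟩
      have h4 := hkey (q y) hqf (p y) h1.le h2
      rw [hrepr, h3, h4]
  have hGge : ∀ y ∈ Δ, g y ≤ G y := by
    intro y hy
    rcases eq_or_ne y 0 with rfl | hy0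
    · rw [hG0]
    · obtain ⟨hqf, hrepr, h1, h2⟩ := hrep y hy hy0
      have h4 := hkey (q y) hqf (p y) h1.le h2
      have h5 := hgconv.2 h0Δ (hfΔ hqf) (by linarith : (0:ℝ) ≤ 1 - p y) h1.le (by ring)
      rw [smul_zero, zero_add] at h5
      calc g y = g (p y • q y) := by rw [← hrepr]
        _ ≤ (1 - p y) • g 0 + p y • g (q y) := h5
        _ = (1 - p y) * g 0 + p y * g (q y) := by simp [smul_eq_mul]
        _ = G (p y • q y) := (hkey (q y) hqf (p y) h1.le h2).symm
        _ = G y := by rw [← hrepr]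
  -- continuity of G
  have hgcontΔ : ContinuousOn g Δ := hclos ▸ hgcont
  have hqmaps : Set.MapsTo q Δ Δ := by
    intro y hy
    rcases eq_or_ne y 0 with rfl | hy0
    · simpa [hqdef, hp0] using h0Δ
    · exact hfΔ (hrep y hy hy0).1
  have hGcont : ContinuousOn G (closure Δ) := by
    rw [hclos]
    intro y hy
    rcases eq_or_ne y 0 with rfl | hy0
    · obtain ⟨M, hM⟩ := hΔc.exists_bound_of_continuousOn hgcontΔ
      have hbound : ∀ x ∈ Δ, ‖G x - g 0‖ ≤ (M + ‖g 0‖) * p x := by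
        intro x hx
        have h1 : G x - g 0 = p x * (g (q x) - g 0) := by
          simp only [hGdef]; ring
        rw [h1, Real.norm_eq_abs, abs_mul, abs_of_nonneg (hpnn x), mul_comm]
        refine mul_le_mul_of_nonneg_right ?_ (hpnn x)
        calc |g (q x) - g 0| ≤ ‖g (q x)‖ + ‖g 0‖ := by
              rw [Real.norm_eq_abs, Real.norm_eq_abs]; exact abs_sub _ _
          _ ≤ M + ‖g 0‖ := by
              have := hM (q x) (hqmaps hx)
              linarith
      have hpt : Filter.Tendsto (fun x => (M + ‖g 0‖) * p x)
          (nhdsWithin 0 Δ) (nhds 0) := by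
        have h2 : Filter.Tendsto p (nhdsWithin (0 : Fin n → ℝ) Δ) (nhds (p 0)) :=
          (hpc.tendsto 0).mono_left nhdsWithin_le_nhds
        have h3 := h2.const_mul (M + ‖g 0‖)
        simpa [hp0] using h3
      have h2 : Filter.Tendsto (fun x => G x - g 0) (nhdsWithin 0 Δ) (nhds 0) :=
        squeeze_zero_norm' (by filter_upwards [self_mem_nhdsWithin] using hbound) hpt
      have h3 : Filter.Tendsto G (nhdsWithin 0 Δ) (nhds (g 0)) := by
        have h4 := h2.add_const (g 0)
        simpa using h4
      show Filter.Tendsto G (nhdsWithin 0 Δ) (nhds (G 0))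
      rw [hG0]
      exact h3
    · have h1 : ContinuousWithinAt q Δ y := by
        have : ContinuousAt q y :=
          ((hpc.continuousAt.inv₀ (hppos y hy0).ne').smul continuousAt_id)
        exact this.continuousWithinAt
      have h2 : ContinuousWithinAt (fun x => g (q x)) Δ y :=
        (hgcontΔ (q y) (hqmaps hy)).comp h1 hqmaps
      exact ((continuousWithinAt_const.sub hpc.continuousWithinAt).mul
          continuousWithinAt_const).add (hpc.continuousWithinAt.mul h2)
  -- computation of the inner integral
  have hsubn : n - 1 + 1 = n := Nat.succ_pred_eq_of_pos hn
  have hInner : ∀ (φ : ℝ → ℝ) (c d : ℝ), (∀ t ∈ Set.Ioc (0:ℝ) 1, φ t = (1 - t) * c + t * d) →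
      (∫ t in Set.Ioc (0:ℝ) 1, t ^ (n - 1) * φ t) = c / n + (d - c) / ((n : ℝ) + 1) := by
    intro φ c d hφ
    have hcongr : ∫ t in Set.Ioc (0:ℝ) 1, t ^ (n - 1) * φ t
        = ∫ t in Set.Ioc (0:ℝ) 1, (c * t ^ (n - 1) + (d - c) * t ^ n) := by
      refine setIntegral_congr_fun measurableSet_Ioc (fun t ht => ?_)
      rw [hφ t ht]
      have h1 : t ^ (n - 1) * t = t ^ n := by
        rw [← pow_succ, hsubn]
      calc t ^ (n - 1) * ((1 - t) * c + t * d)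
          = c * t ^ (n - 1) + (d - c) * (t ^ (n - 1) * t) := by ring
        _ = c * t ^ (n - 1) + (d - c) * t ^ n := by rw [h1]
    rw [hcongr, ← intervalIntegral.integral_of_le zero_le_one]
    have h1 : IntervalIntegrable (fun t : ℝ => c * t ^ (n - 1)) volume 0 1 :=
      (intervalIntegral.intervalIntegrable_pow _).const_mul c
    have h2 : IntervalIntegrable (fun t : ℝ => (d - c) * t ^ n) volume 0 1 :=
      (intervalIntegral.intervalIntegrable_pow _).const_mul (d - c)
    rw [intervalIntegral.integral_add h1 h2, intervalIntegral.integral_const_mul,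
      intervalIntegral.integral_const_mul, integral_pow, integral_pow]
    have h4 : (((n - 1 : ℕ) : ℝ) + 1) = (n : ℝ) := by
      exact_mod_cast congrArg (Nat.cast (R := ℝ)) hsubn
    rw [h4, one_pow, one_pow, zero_pow (by omega : n - 1 + 1 ≠ 0),
      zero_pow (by omega : n + 1 ≠ 0)]
    field_simp
    ring
  -- boundary measure facts
  set S : ℝ := (σ (frontier Δ)).toReal with hSdef
  have hfmeas : MeasurableSet (frontier Δ) := isClosed_frontier.measurableSet
  have hfc : IsCompact (frontier Δ) := hΔc.of_isClosed_subset isClosed_frontier hfΔ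
  have hSV : S = n * V := by
    have h1 := hpull (fun _ => (1 : ℝ)) continuousOn_const
    have h2 : ∫ z in frontier Δ,
          (∫ t in Set.Ioc (0:ℝ) 1, t ^ (n - 1) * (fun _ : Fin n → ℝ => (1:ℝ)) (t • z)) ∂σ
        = ∫ _z in frontier Δ, ((1:ℝ) / n + (1 - 1) / ((n:ℝ) + 1)) ∂σ := by
      refine setIntegral_congr_fun hfmeas (fun z _hz => ?_)
      exact hInner _ 1 1 (fun t _ht => by ring)
    rw [h2, setIntegral_const, setIntegral_const] at h1
    have h3 : V = S * ((1:ℝ) / n + (1 - 1) / ((n:ℝ) + 1)) := by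
      simpa [smul_eq_mul, Measure.real, ← hVdef, ← hSdef] using h1
    rw [h3]
    field_simp
    ring
  -- pulled-back integral of G
  have hgintb : IntegrableOn g (frontier Δ) σ := (hgcontΔ.mono hfΔ).integrableOn_compact hfc
  have hB : (∫ z in frontier Δ, g z ∂σ) = ((n:ℝ) + 1) * (∫ y in Δ, G y) - V * g 0 := by
    have hGint := hpull G hGcont
    have h2 : ∫ z in frontier Δ, (∫ t in Set.Ioc (0:ℝ) 1, t ^ (n - 1) * G (t • z)) ∂σ
        = ∫ z in frontier Δ, (g 0 / n + (g z - g 0) / ((n:ℝ) + 1)) ∂σ := by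
      refine setIntegral_congr_fun hfmeas (fun z hz => ?_)
      exact hInner _ _ _ (fun t ht => hkey z hz t ht.1.le ht.2)
    rw [h2] at hGint
    have h4 : ∀ z : Fin n → ℝ, g 0 / n + (g z - g 0) / ((n:ℝ) + 1)
        = (g 0 / (n:ℝ) - g 0 / ((n:ℝ) + 1)) + g z * (1 / ((n:ℝ) + 1)) := fun z => by ring
    simp only [h4] at hGint
    rw [integral_add (integrableOn_const (C := g 0 / (n:ℝ) - g 0 / ((n:ℝ) + 1)) (measure_lt_top σ _).ne enorm_ne_top)
      (hgintb.mul_const _), setIntegral_const, integral_mul_const] at hGint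
    rw [smul_eq_mul, measureReal_def, ← hSdef, hSV] at hGint
    have hc : (n:ℝ) * V * (g 0 / (n:ℝ) - g 0 / ((n:ℝ) + 1)) = V * g 0 / ((n:ℝ) + 1) := by
      field_simp
      ring
    rw [hc] at hGint
    rw [hGint]
    field_simp
    ring
  -- integrability over Δ
  have hgind : IntegrableOn g Δ volume := hgcontΔ.integrableOn_compact hΔc
  have hGind : IntegrableOn G Δ volume := (hclos ▸ hGcont).integrableOn_compact hΔc
  have hlc : Continuous l := by
    obtain ⟨a, c, hl⟩ := hla
    have : l = fun y => (∑ i, a i * y i) + c := funext hl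
    rw [this]
    exact (continuous_finset_sum _ fun i _ =>
      (continuous_const.mul (continuous_apply i))).add continuous_const
  have hglind : IntegrableOn (fun y => g y * l y) Δ volume :=
    (hgcontΔ.mul hlc.continuousOn).integrableOn_compact hΔc
  have hgbarind : IntegrableOn gbar Δ volume :=
    hGind.congr_fun (fun y hy => (hGgbar y hy).symm) hΔmeas
  have hEgbar : ∫ y in Δ, gbar y = ∫ y in Δ, G y :=
    setIntegral_congr_fun hΔmeas (fun y hy => hGgbar y hy)
  have hsubint : ∫ y in Δ, (gbar y - g y) = (∫ y in Δ, G y) - ∫ y in Δ, g y := by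
    rw [integral_sub hgbarind hgind, hEgbar]
  have hmainint : ∫ y in Δ, g y * ((n:ℝ) + (1 - V * l y))
      = ((n:ℝ) + 1) * (∫ y in Δ, g y) - V * ∫ y in Δ, g y * l y := by
    have h1 : ∀ y : Fin n → ℝ, g y * ((n:ℝ) + (1 - V * l y))
        = ((n:ℝ) + 1) * g y - V * (g y * l y) := fun y => by ring
    simp only [h1]
    rw [integral_sub (hgind.const_mul _) (hglind.const_mul _),
      integral_const_mul, integral_const_mul]
  -- the main identity
  have hkey1 : V⁻¹ * ((∫ z in frontier Δ, g z ∂σ) -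
        ∫ y in Δ, g y * ((n:ℝ) + (1 - V * l y))) - (-g 0 + ∫ y in Δ, g y * l y)
      = ((n:ℝ) + 1) * V⁻¹ * ∫ y in Δ, (gbar y - g y) := by
    rw [hmainint, hsubint, hB]
    field_simp
    ring
  have hpos : 0 ≤ ((n:ℝ) + 1) * V⁻¹ * ∫ y in Δ, (gbar y - g y) := by
    have h1 : 0 ≤ ∫ y in Δ, (gbar y - g y) := by
      refine setIntegral_nonneg hΔmeas (fun y hy => ?_)
      have h2 := hGge y hy
      rw [← hGgbar y hy] at h2
      linarith
    have h2 : 0 ≤ ((n:ℝ) + 1) * V⁻¹ := by positivity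
    exact mul_nonneg h2 h1
  exact ⟨hkey1, hpos, fun hI => by linarith [hkey1, hpos]⟩
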